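/- arXiv:1409.0097 — 2 statements merged into one kernel-verified Lean document; each statement's English description precedes it below -/
import Mathlib

section
/- For every vector v in R^n and every real Q ≥ 1, there exist a positive integer q and an integer vector p in Z^n such that ‖q•v - p‖ < Q^(-1/n) (sup-norm) and q ≤ Q. -/
open MeasureTheory Set Matrix ENNReal

/-- Dirichlet's theorem on simultaneous Diophantine approximation:
for every `v : ℝⁿ` (with sup-norm) and every real `Q ≥ 1`, there exist a positive
integer `q` and an integer vector `p` with `‖q • v - p‖ < Q^(-1/n)` and `q ≤ Q`. -/
theorem dirichlet_simultaneous (n : ℕ) (hn : 0 < n) (v : Fin n → ℝ) (Q : ℝ) (hQ : 1 ≤ Q) :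
    ∃ (q : ℕ) (p : Fin n → ℤ), 0 < q ∧ (q : ℝ) ≤ Q ∧
      ‖(q : ℝ) • v - (fun i => (p i : ℝ))‖ < Q ^ (-(1 : ℝ) / n) := by
  have hQ0 : (0:ℝ) < Q := lt_of_lt_of_le one_pos hQ
  set δ : ℝ := Q ^ (-(1 : ℝ) / n) with hδdef
  have hδ0 : 0 < δ := Real.rpow_pos_of_pos hQ0 _
  have hδ1 : δ ≤ 1 := Real.rpow_le_one_of_one_le_of_nonpos hQ
    (div_nonpos_of_nonpos_of_nonneg (by norm_num) (Nat.cast_nonneg n))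
  have hδn : δ ^ n = Q⁻¹ := by
    rw [hδdef, ← Real.rpow_natCast (Q ^ (-(1:ℝ)/n)) n, ← Real.rpow_mul hQ0.le,
      div_mul_cancel₀ _ (by exact_mod_cast hn.ne' : (n:ℝ) ≠ 0), Real.rpow_neg_one]
  set B : ℝ := (⌊Q⌋ : ℝ) + 1 with hBdef
  have hQB : Q < B := Int.lt_floor_add_one Q
  have hB0 : 0 < B := hQ0.trans hQB
  -- the shear matrix
  set M : Matrix (Fin (n+1)) (Fin (n+1)) ℝ := Matrix.of
    (Fin.cases (fun j => Fin.cases 1 (fun _ => 0) j)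
      (fun i' j => Fin.cases (v i') (fun j' => if i' = j' then -1 else 0) j)) with hM
  have hMtri : M.BlockTriangular OrderDual.toDual := by
    intro i j hij
    rw [OrderDual.toDual_lt_toDual] at hij
    induction i using Fin.cases with
    | zero =>
      induction j using Fin.cases with
      | zero => exact absurd hij (lt_irrefl _)
      | succ j' => simp [hM]
    | succ i' =>
      induction j using Fin.cases with
      | zero => exact absurd hij (by simp [Fin.lt_def])
      | succ j' =>
        have : i' ≠ j' := by
          intro h; subst h; exact absurd hij (lt_irrefl _)
        simp [hM, this]
  have hMdet : M.det = (-1) ^ n := by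
    rw [Matrix.det_of_lowerTriangular M hMtri, Fin.prod_univ_succ]
    simp [hM]
  set f : (Fin (n+1) → ℝ) →ₗ[ℝ] (Fin (n+1) → ℝ) := Matrix.toLin' M with hf
  have hfdet : LinearMap.det f = (-1) ^ n := by rw [hf, LinearMap.det_toLin', hMdet]
  have hfdet_ne : LinearMap.det f ≠ 0 := by
    rw [hfdet]; exact pow_ne_zero _ (by norm_num)
  have hfx : ∀ x : Fin (n+1) → ℝ, f x 0 = x 0 ∧ ∀ i : Fin n,
      f x i.succ = v i * x 0 - x i.succ := by
    intro x
    have h0 : f x 0 = x 0 := by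
      simp only [hf, Matrix.toLin'_apply, Matrix.mulVec, dotProduct]
      rw [Fin.sum_univ_succ]
      simp [hM]
    refine ⟨h0, fun i => ?_⟩
    simp only [hf, Matrix.toLin'_apply, Matrix.mulVec, dotProduct]
    rw [Fin.sum_univ_succ]
    simp only [hM, Matrix.of_apply, Fin.cases_succ, Fin.cases_zero]
    simp only [ite_mul, neg_one_mul, zero_mul]
    rw [Finset.sum_ite_eq]
    simp [sub_eq_add_neg]
  -- the box
  set c : Fin (n+1) → ℝ := Fin.cons B (fun _ => δ) with hc
  set box : Set (Fin (n+1) → ℝ) := Set.univ.pi (fun j => Set.Ioo (-(c j)) (c j)) with hbox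
  have hbox_symm : ∀ y ∈ box, -y ∈ box := by
    intro y hy j _
    have := hy j (Set.mem_univ j)
    simp only [Set.mem_Ioo] at this ⊢
    constructor <;> simp only [Pi.neg_apply] <;> linarith [this.1, this.2]
  have hbox_conv : Convex ℝ box := convex_pi (fun j _ => convex_Ioo _ _)
  set s : Set (Fin (n+1) → ℝ) := f ⁻¹' box with hs
  have hs_symm : ∀ x ∈ s, -x ∈ s := by
    intro x hx
    simp only [hs, Set.mem_preimage, map_neg] at *
    exact hbox_symm _ hx
  have hs_conv : Convex ℝ s := hbox_conv.linear_preimage f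
  -- volume computation
  have hvol_box : volume box = ENNReal.ofReal (2 * B) * ENNReal.ofReal (2 * δ) ^ n := by
    rw [hbox, volume_pi_pi]
    simp only [Real.volume_Ioo]
    rw [Fin.prod_univ_succ]
    simp only [hc, Fin.cons_zero, Fin.cons_succ]
    rw [Finset.prod_const, Finset.card_univ, Fintype.card_fin]
    rw [two_mul, two_mul, sub_neg_eq_add, sub_neg_eq_add]
  have hvol_s : volume s = ENNReal.ofReal (2 * B) * ENNReal.ofReal (2 * δ) ^ n := by
    rw [hs, MeasureTheory.Measure.addHaar_preimage_linearMap volume hfdet_ne, hfdet, hvol_box]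
    have : |(((-1:ℝ)) ^ n)⁻¹| = 1 := by
      rw [abs_inv, abs_pow, abs_neg, abs_one, one_pow, inv_one]
    rw [this, ENNReal.ofReal_one, one_mul]
  -- fundamental domain
  set L := (Submodule.span ℤ (Set.range (Pi.basisFun ℝ (Fin (n+1))))).toAddSubgroup with hL
  have fund := ZSpan.isAddFundamentalDomain' (Pi.basisFun ℝ (Fin (n+1))) (volume : Measure (Fin (n+1) → ℝ))
  have hvolF : volume (ZSpan.fundamentalDomain (Pi.basisFun ℝ (Fin (n+1)))) = 1 := by
    rw [ZSpan.fundamentalDomain_pi_basisFun, volume_pi_pi]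
    simp
  -- the key inequality
  have hlt : volume (ZSpan.fundamentalDomain (Pi.basisFun ℝ (Fin (n+1)))) *
      2 ^ (Module.finrank ℝ (Fin (n+1) → ℝ)) < volume s := by
    rw [hvolF, one_mul, hvol_s, Module.finrank_pi, Fintype.card_fin]
    have h2 : ((2:ℝ≥0∞)) ^ (n+1) = ENNReal.ofReal ((2:ℝ)^(n+1)) := by
      rw [ENNReal.ofReal_pow (by norm_num)]; norm_num
    rw [h2, ← ENNReal.ofReal_pow (by positivity), ← ENNReal.ofReal_mul (by positivity)]
    rw [ENNReal.ofReal_lt_ofReal_iff (by positivity)]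
    have : 2 * B * (2 * δ) ^ n = 2 ^ (n+1) * (B / Q) := by
      rw [mul_pow, hδn]
      field_simp
      ring
    rw [this]
    have hBQ : 1 < B / Q := (one_lt_div hQ0).mpr hQB
    nlinarith [pow_pos (by norm_num : (0:ℝ) < 2) (n+1)]
  haveI : Countable (Submodule.span ℤ (Set.range ⇑(Pi.basisFun ℝ (Fin (n+1))))).toAddSubgroup :=
    inferInstanceAs (Countable (Submodule.span ℤ (Set.range ⇑(Pi.basisFun ℝ (Fin (n+1))))))
  obtain ⟨x, hx_nz, hx_mem⟩ :=
    exists_ne_zero_mem_lattice_of_measure_mul_two_pow_lt_measure fund hs_symm hs_conv hlt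
  -- x has integer coordinates
  have hint : ∀ j, ∃ z : ℤ, (z : ℝ) = (x : Fin (n+1) → ℝ) j := by
    intro j
    have := ((Pi.basisFun ℝ (Fin (n+1))).mem_span_iff_repr_mem ℤ (x : Fin (n+1) → ℝ)).mp
      (SetLike.coe_mem x) j
    simpa [algebraMap] using this
  choose g hg using hint
  -- extract box membership
  have hx0 : |(x : Fin (n+1) → ℝ) 0| < B := by
    have := hx_mem 0 (Set.mem_univ 0)
    rw [(hfx x).1] at this
    simp only [hc, Fin.cons_zero, Set.mem_Ioo] at this
    exact abs_lt.mpr this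
  have hxi : ∀ i : Fin n, |v i * (x : Fin (n+1) → ℝ) 0 - (x : Fin (n+1) → ℝ) i.succ| < δ := by
    intro i
    have := hx_mem i.succ (Set.mem_univ i.succ)
    rw [(hfx x).2 i] at this
    simp only [hc, Fin.cons_succ, Set.mem_Ioo] at this
    exact abs_lt.mpr this
  -- g 0 ≠ 0
  have hg0 : g 0 ≠ 0 := by
    intro h0
    apply hx_nz
    have hcoe : (x : Fin (n+1) → ℝ) = 0 := by
      funext j
      induction j using Fin.cases with
      | zero => rw [← hg 0, h0]; simp
      | succ i =>
        have h1 : (x : Fin (n+1) → ℝ) 0 = 0 := by rw [← hg 0, h0]; simp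
        have := hxi i
        rw [h1, mul_zero, zero_sub, abs_neg] at this
        have : |(g i.succ : ℝ)| < 1 := by rw [hg i.succ]; exact lt_of_lt_of_le this hδ1
        have : g i.succ = 0 := by
          rw [← Int.cast_abs] at this
          exact_mod_cast Int.abs_lt_one_iff.mp (by exact_mod_cast this)
        rw [← hg i.succ, this]; simp
    exact Subtype.ext hcoe
  -- define q and p
  set ε : ℤ := if 0 < g 0 then 1 else -1 with hε
  have hεx : (ε : ℝ) * (x : Fin (n+1) → ℝ) 0 = |(x : Fin (n+1) → ℝ) 0| := by
    rw [← hg 0]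
    by_cases h : 0 < g 0
    · simp only [hε, if_pos h]
      rw [abs_of_pos (by exact_mod_cast h)]; ring
    · have hneg : g 0 < 0 := lt_of_le_of_ne (not_lt.mp h) hg0
      simp only [hε, if_neg h]
      rw [abs_of_neg (by exact_mod_cast hneg)]; push_cast; ring
  refine ⟨(g 0).natAbs, fun i => ε * g i.succ, Int.natAbs_pos.mpr hg0, ?_, ?_⟩
  · -- q ≤ Q
    have h1 : ((g 0).natAbs : ℝ) = |(x : Fin (n+1) → ℝ) 0| := by
      rw [Nat.cast_natAbs, Int.cast_abs, hg 0]
    have h2 : ((g 0).natAbs : ℝ) < (⌊Q⌋:ℝ) + 1 := by rw [h1]; exact hx0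
    have h3 : ((g 0).natAbs : ℤ) ≤ ⌊Q⌋ := by
      have h4 : (|g 0| : ℝ) < ((⌊Q⌋ + 1 : ℤ) : ℝ) := by
        push_cast
        rw [hg 0]; exact hx0
      have h5 : |g 0| < ⌊Q⌋ + 1 := by exact_mod_cast h4
      rw [Int.abs_eq_natAbs] at h5
      omega
    calc ((g 0).natAbs : ℝ) = (((g 0).natAbs : ℤ) : ℝ) := (Int.cast_natCast _).symm
      _ ≤ (⌊Q⌋ : ℝ) := Int.cast_le.mpr h3
      _ ≤ Q := Int.floor_le Q
  · -- norm bound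
    rw [pi_norm_lt_iff hδ0]
    intro i
    simp only [Pi.sub_apply, Pi.smul_apply, smul_eq_mul, Real.norm_eq_abs]
    have key : ((g 0).natAbs : ℝ) * v i - ((ε * g i.succ : ℤ) : ℝ)
        = (ε : ℝ) * (v i * (x : Fin (n+1) → ℝ) 0 - (x : Fin (n+1) → ℝ) i.succ) := by
      have h1 : ((g 0).natAbs : ℝ) = (ε : ℝ) * (x : Fin (n+1) → ℝ) 0 := by
        rw [hεx, Nat.cast_natAbs, Int.cast_abs, hg 0]
      rw [h1, ← hg i.succ]; push_cast; ring
    rw [key, abs_mul]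
    have hεabs : |(ε : ℝ)| = 1 := by
      by_cases h : 0 < g 0 <;> simp [hε, h]
    rw [hεabs, one_mul]
    exact hxi i
end

section
/- Let g ∈ SL₃(R) and let g⁻¹U⁺g ∩ SL₃(Z) be a lattice in g⁻¹U⁺g, where U⁺ is the full upper triangular unipotent subgroup. Then there exists g₀ ∈ SL₃(Q) such that g⁻¹U⁺g = g₀⁻¹U⁺g₀. -/
open Matrix

/-- The full upper triangular unipotent subgroup of `SL₃(ℝ)`, as a set of matrices. -/
def Uplus : Set (Matrix (Fin 3) (Fin 3) ℝ) :=
  {m | (∀ i : Fin 3, m i i = 1) ∧ (∀ i j : Fin 3, j < i → m i j = 0) ∧ m.det = 1}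

/-- strictly upper triangular 3x3 matrix with parameters -/
def n3 (a b c : ℝ) : Matrix (Fin 3) (Fin 3) ℝ := !![0,a,c; 0,0,b; 0,0,0]

theorem mem_Uplus_iff (m : Matrix (Fin 3) (Fin 3) ℝ) :
    m ∈ Uplus ↔ ∃ a b c : ℝ, m = 1 + n3 a b c := by
  constructor
  · rintro ⟨h1, h2, _⟩
    refine ⟨m 0 1, m 1 2, m 0 2, ?_⟩
    ext i j
    fin_cases i <;> fin_cases j <;>
      simp [n3, Matrix.vecHead, Matrix.vecTail, Matrix.one_apply, h1 0, h1 1, h1 2,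
        h2 1 0 (by decide), h2 2 0 (by decide), h2 2 1 (by decide)]
  · rintro ⟨a, b, c, rfl⟩
    refine ⟨?_, ?_, ?_⟩
    · intro i; fin_cases i <;> simp [n3, Matrix.vecHead, Matrix.vecTail, Matrix.one_apply]
    · intro i j hij; fin_cases i <;> fin_cases j <;> simp_all [n3, Matrix.vecHead, Matrix.vecTail, Matrix.one_apply]
    · simp [Matrix.det_fin_three, n3, Matrix.vecHead, Matrix.vecTail, Matrix.one_apply]

theorem n3_mul (a b c a' b' c' : ℝ) : n3 a b c * n3 a' b' c' = n3 0 0 (a*b') := by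
  ext i j
  fin_cases i <;> fin_cases j <;>
    simp [n3, Matrix.vecHead, Matrix.vecTail, Matrix.mul_apply, Fin.sum_univ_three]

theorem n3_add (a b c a' b' c' : ℝ) : n3 a b c + n3 a' b' c' = n3 (a+a') (b+b') (c+c') := by
  ext i j
  fin_cases i <;> fin_cases j <;> simp [n3, Matrix.vecHead, Matrix.vecTail]

section ConjG
variable {g : Matrix (Fin 3) (Fin 3) ℝ}

theorem hdetu (hg : g.det = 1) : IsUnit g.det := by rw [hg]; exact isUnit_one

theorem conj_back (hg : g.det = 1) (x : Matrix (Fin 3) (Fin 3) ℝ) :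
    g * (g⁻¹ * x * g) * g⁻¹ = x := by
  have h1 : g * g⁻¹ = 1 := Matrix.mul_nonsing_inv g (hdetu hg)
  calc g * (g⁻¹ * x * g) * g⁻¹ = (g * g⁻¹) * x * (g * g⁻¹) := by
        simp only [Matrix.mul_assoc]
    _ = x := by rw [h1]; simp

theorem img_eq (hg : g.det = 1) :
    ((fun x => g⁻¹ * x * g) '' Uplus) =
      {m | ∃ a b c : ℝ, m = 1 + g⁻¹ * n3 a b c * g} := by
  have h2 : g⁻¹ * g = 1 := Matrix.nonsing_inv_mul g (hdetu hg)
  ext m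
  simp only [Set.mem_image, Set.mem_setOf_eq]
  constructor
  · rintro ⟨x, hx, rfl⟩
    obtain ⟨a, b, c, rfl⟩ := (mem_Uplus_iff x).1 hx
    exact ⟨a, b, c, by rw [Matrix.mul_add, Matrix.add_mul, Matrix.mul_one, h2]⟩
  · rintro ⟨a, b, c, rfl⟩
    exact ⟨1 + n3 a b c, (mem_Uplus_iff _).2 ⟨a, b, c, rfl⟩,
      by rw [Matrix.mul_add, Matrix.add_mul, Matrix.mul_one, h2]⟩

theorem conj_mul' (hg : g.det = 1) (x y : Matrix (Fin 3) (Fin 3) ℝ) :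
    (g⁻¹ * x * g) * (g⁻¹ * y * g) = g⁻¹ * (x * y) * g := by
  have h1 : g * g⁻¹ = 1 := Matrix.mul_nonsing_inv g (hdetu hg)
  calc (g⁻¹ * x * g) * (g⁻¹ * y * g) = g⁻¹ * x * (g * g⁻¹) * y * g := by
        simp only [Matrix.mul_assoc]
    _ = g⁻¹ * (x * y) * g := by rw [h1]; simp [Matrix.mul_assoc]

theorem mul_formula (hg : g.det = 1) (a b c a' b' c' : ℝ) :
    (1 + g⁻¹ * n3 a b c * g) * (1 + g⁻¹ * n3 a' b' c' * g) =
      1 + g⁻¹ * n3 (a+a') (b+b') (c+c'+a*b') * g := by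
  have key : (g⁻¹ * n3 a b c * g) * (g⁻¹ * n3 a' b' c' * g)
      = g⁻¹ * n3 0 0 (a*b') * g := by rw [conj_mul' hg, n3_mul]
  have expand : (1 + g⁻¹ * n3 a b c * g) * (1 + g⁻¹ * n3 a' b' c' * g) =
      1 + (g⁻¹ * n3 a b c * g + g⁻¹ * n3 a' b' c' * g +
        (g⁻¹ * n3 a b c * g) * (g⁻¹ * n3 a' b' c' * g)) := by noncomm_ring
  rw [expand, key]
  have : g⁻¹ * n3 a b c * g + g⁻¹ * n3 a' b' c' * g + g⁻¹ * n3 0 0 (a*b') * g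
      = g⁻¹ * (n3 a b c + n3 a' b' c' + n3 0 0 (a*b')) * g := by noncomm_ring
  rw [this, n3_add, n3_add]
  ring_nf

end ConjG

theorem coord_a {g : Matrix (Fin 3) (Fin 3) ℝ} (hg : g.det = 1) (a b c : ℝ) :
    (g * ((1 + g⁻¹ * n3 a b c * g) - 1) * g⁻¹) 0 1 = a := by
  have : (1 + g⁻¹ * n3 a b c * g) - 1 = g⁻¹ * n3 a b c * g := by abel
  rw [this, conj_back hg]
  simp [n3]

theorem coord_b {g : Matrix (Fin 3) (Fin 3) ℝ} (hg : g.det = 1) (a b c : ℝ) :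
    (g * ((1 + g⁻¹ * n3 a b c * g) - 1) * g⁻¹) 1 2 = b := by
  have : (1 + g⁻¹ * n3 a b c * g) - 1 = g⁻¹ * n3 a b c * g := by abel
  rw [this, conj_back hg]
  simp [n3, Matrix.vecHead, Matrix.vecTail]

theorem exists_indep (g : Matrix (Fin 3) (Fin 3) ℝ) (hg : g.det = 1)
    (L : Set (Matrix (Fin 3) (Fin 3) ℝ))
    (hL : L = ((fun x => g⁻¹ * x * g) '' Uplus) ∩
      {m | ∀ i j : Fin 3, ∃ k : ℤ, m i j = (k : ℝ)})
    (hcocpt : ∃ K : Set (Matrix (Fin 3) (Fin 3) ℝ), IsCompact K ∧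
      K ⊆ (fun x => g⁻¹ * x * g) '' Uplus ∧
      ∀ c ∈ (fun x => g⁻¹ * x * g) '' Uplus, ∃ l ∈ L, c * l ∈ K) :
    ∃ a₁ b₁ c₁ a₂ b₂ c₂ : ℝ, (1 + g⁻¹ * n3 a₁ b₁ c₁ * g) ∈ L ∧
      (1 + g⁻¹ * n3 a₂ b₂ c₂ * g) ∈ L ∧ a₁*b₂ - a₂*b₁ ≠ 0 := by
  obtain ⟨K, hKc, hKsub, hcov⟩ := hcocpt
  set al : Matrix (Fin 3) (Fin 3) ℝ → ℝ := fun m => (g * (m - 1) * g⁻¹) 0 1 with hal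
  set bl : Matrix (Fin 3) (Fin 3) ℝ → ℝ := fun m => (g * (m - 1) * g⁻¹) 1 2 with hbl
  have hcont : Continuous fun m : Matrix (Fin 3) (Fin 3) ℝ => (al m, bl m) := by
    have h0 : Continuous fun m : Matrix (Fin 3) (Fin 3) ℝ => g * (m - 1) * g⁻¹ :=
      (continuous_const.matrix_mul (continuous_id.sub continuous_const)).matrix_mul
        continuous_const
    exact Continuous.prodMk
      ((continuous_apply (1 : Fin 3)).comp ((continuous_apply (0 : Fin 3)).comp h0))
      ((continuous_apply (2 : Fin 3)).comp ((continuous_apply (1 : Fin 3)).comp h0))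
  obtain ⟨C, hC⟩ := hKc.exists_bound_of_continuousOn hcont.continuousOn
  have hmemL : ∀ l ∈ L, ∃ a' b' c' : ℝ, l = 1 + g⁻¹ * n3 a' b' c' * g := by
    intro l hl
    rw [hL] at hl
    have := hl.1
    rw [img_eq hg] at this
    exact this
  have key : ∀ a b : ℝ, ∃ a' b' c' : ℝ, (1 + g⁻¹ * n3 a' b' c' * g) ∈ L ∧
      |a + a'| ≤ C ∧ |b + b'| ≤ C := by
    intro a b
    have hc : (1 + g⁻¹ * n3 a b 0 * g) ∈ (fun x => g⁻¹ * x * g) '' Uplus := by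
      rw [img_eq hg]; exact ⟨a, b, 0, rfl⟩
    obtain ⟨l, hlL, hlK⟩ := hcov _ hc
    obtain ⟨a', b', c', hl⟩ := hmemL l hlL
    subst hl
    rw [mul_formula hg] at hlK
    have hCle := hC _ hlK
    set x := 1 + g⁻¹ * n3 (a+a') (b+b') (0+c'+a*b') * g with hx
    have hax : al x = a + a' := coord_a hg _ _ _
    have hbx : bl x = b + b' := coord_b hg _ _ _
    refine ⟨a', b', c', hlL, ?_, ?_⟩
    · rw [← hax]
      simpa [Real.norm_eq_abs] using le_trans (norm_fst_le (al x, bl x)) hCle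
    · rw [← hbx]
      simpa [Real.norm_eq_abs] using le_trans (norm_snd_le (al x, bl x)) hCle
  by_contra hcon
  push_neg at hcon
  have hperp : ∃ p1 p2 : ℝ, p1^2 + p2^2 ≠ 0 ∧
      ∀ a' b' c' : ℝ, (1 + g⁻¹ * n3 a' b' c' * g) ∈ L → p1*a' + p2*b' = 0 := by
    by_cases hex : ∃ a₀ b₀ c₀ : ℝ, (1 + g⁻¹ * n3 a₀ b₀ c₀ * g) ∈ L ∧ (a₀ ≠ 0 ∨ b₀ ≠ 0)
    · obtain ⟨a₀, b₀, c₀, h₀, hne⟩ := hex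
      refine ⟨-b₀, a₀, ?_, ?_⟩
      · intro heq
        rcases hne with h | h
        · have h1 : a₀^2 = 0 := by nlinarith [sq_nonneg a₀, sq_nonneg b₀]
          exact h ((pow_eq_zero_iff two_ne_zero).mp h1)
        · have h1 : b₀^2 = 0 := by nlinarith [sq_nonneg a₀, sq_nonneg b₀]
          exact h ((pow_eq_zero_iff two_ne_zero).mp h1)
      · intro a' b' c' hmem
        have := hcon a₀ b₀ c₀ a' b' c' h₀ hmem
        linarith [this]
    · push_neg at hex
      refine ⟨1, 0, by norm_num, ?_⟩
      intro a' b' c' hmem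
      have := (hex a' b' c' hmem).1
      simp [this]
  obtain ⟨p1, p2, hp, hP⟩ := hperp
  set t : ℝ := ((|p1| + |p2|) * C + 1)/(p1^2 + p2^2) with htdef
  obtain ⟨a', b', c', hmem, h1, h2⟩ := key (t*p1) (t*p2)
  have hPeq := hP a' b' c' hmem
  have e : p1*(t*p1 + a') + p2*(t*p2 + b') = t*(p1^2 + p2^2) := by linear_combination hPeq
  have ht : t*(p1^2 + p2^2) = (|p1| + |p2|) * C + 1 := by
    rw [htdef, div_mul_cancel₀ _ hp]
  have hA : p1*(t*p1 + a') ≤ |p1| * C := by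
    calc p1*(t*p1 + a') ≤ |p1*(t*p1 + a')| := le_abs_self _
      _ = |p1| * |t*p1 + a'| := abs_mul _ _
      _ ≤ |p1| * C := mul_le_mul_of_nonneg_left h1 (abs_nonneg _)
  have hB : p2*(t*p2 + b') ≤ |p2| * C := by
    calc p2*(t*p2 + b') ≤ |p2*(t*p2 + b')| := le_abs_self _
      _ = |p2| * |t*p2 + b'| := abs_mul _ _
      _ ≤ |p2| * C := mul_le_mul_of_nonneg_left h2 (abs_nonneg _)
  nlinarith [e, ht, hA, hB]

theorem n3_mulVec (a b c : ℝ) (y : Fin 3 → ℝ) :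
    n3 a b c *ᵥ y = (a * y 1 + c * y 2) • (Pi.single 0 1 : Fin 3 → ℝ)
      + (b * y 2) • (Pi.single 1 1 : Fin 3 → ℝ) := by
  funext i
  fin_cases i <;>
    simp [n3, Matrix.mulVec, dotProduct, Fin.sum_univ_three, Pi.single_apply,
      Matrix.vecHead, Matrix.vecTail]

theorem flag_lemma (g P : Matrix (Fin 3) (Fin 3) ℝ) (hg : g.det = 1) (hP : P.det = 1)
    (u u' v₁ v₂ : Fin 3 → ℝ) (s p q : ℝ) (hs : s ≠ 0) (hq : q ≠ 0)
    (hgu : g *ᵥ u = (Pi.single 0 1 : Fin 3 → ℝ)) (hgu' : g *ᵥ u' = (Pi.single 1 1 : Fin 3 → ℝ))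
    (hv₁ : v₁ = s • u) (hv₂ : v₂ = p • u + q • u')
    (hP0 : ∀ i, P i 0 = v₁ i) (hP1 : ∀ i, P i 1 = v₂ i) (a b c : ℝ) :
    P⁻¹ * (g⁻¹ * n3 a b c * g) * P =
      n3 ((P⁻¹ * (g⁻¹ * n3 a b c * g) * P) 0 1)
         ((P⁻¹ * (g⁻¹ * n3 a b c * g) * P) 1 2)
         ((P⁻¹ * (g⁻¹ * n3 a b c * g) * P) 0 2) := by
  have hPu : IsUnit P.det := by rw [hP]; exact isUnit_one
  have hgudet : IsUnit g.det := by rw [hg]; exact isUnit_one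
  have hig : g⁻¹ * g = 1 := Matrix.nonsing_inv_mul g hgudet
  have hiP : P⁻¹ * P = 1 := Matrix.nonsing_inv_mul P hPu
  set w := g⁻¹ * n3 a b c * g with hw
  set X := P⁻¹ * w * P with hX
  -- action of w on vectors
  have hwy : ∀ y : Fin 3 → ℝ,
      w *ᵥ y = (a * (g *ᵥ y) 1 + c * (g *ᵥ y) 2) • u + (b * (g *ᵥ y) 2) • u' := by
    intro y
    have h1 : w *ᵥ y = g⁻¹ *ᵥ (n3 a b c *ᵥ (g *ᵥ y)) := by
      rw [Matrix.mulVec_mulVec, Matrix.mulVec_mulVec]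
    have hu : g⁻¹ *ᵥ (Pi.single 0 1 : Fin 3 → ℝ) = u := by
      rw [← hgu, Matrix.mulVec_mulVec, hig, Matrix.one_mulVec]
    have hu' : g⁻¹ *ᵥ (Pi.single 1 1 : Fin 3 → ℝ) = u' := by
      rw [← hgu', Matrix.mulVec_mulVec, hig, Matrix.one_mulVec]
    rw [h1, n3_mulVec, Matrix.mulVec_add, Matrix.mulVec_smul, Matrix.mulVec_smul, hu, hu']
  -- columns of P
  have hPv₁ : P *ᵥ (Pi.single 0 1 : Fin 3 → ℝ) = v₁ := by
    rw [Matrix.mulVec_single]; funext i; simp only [MulOpposite.op_one, one_smul]; exact hP0 i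
  have hPv₂ : P *ᵥ (Pi.single 1 1 : Fin 3 → ℝ) = v₂ := by
    rw [Matrix.mulVec_single]; funext i; simp only [MulOpposite.op_one, one_smul]; exact hP1 i
  have hPinvVec : ∀ y, P⁻¹ *ᵥ (P *ᵥ y) = y := by
    intro y; rw [Matrix.mulVec_mulVec, hiP, Matrix.one_mulVec]
  -- column 0 of X
  have hwv₁ : w *ᵥ v₁ = 0 := by
    rw [hv₁, Matrix.mulVec_smul, hwy u, hgu]
    simp [Pi.single_apply]
  have hX0 : X *ᵥ (Pi.single 0 1 : Fin 3 → ℝ) = 0 := by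
    rw [hX, ← Matrix.mulVec_mulVec, ← Matrix.mulVec_mulVec, hPv₁, hwv₁, Matrix.mulVec_zero]
  -- column 1 of X
  have hwu' : w *ᵥ u' = a • u := by
    rw [hwy u', hgu']
    simp [Pi.single_apply]
  have hwu : w *ᵥ u = 0 := by
    rw [hwy u, hgu]
    simp [Pi.single_apply]
  have hwv₂ : w *ᵥ v₂ = (q * a / s) • v₁ := by
    rw [hv₂, Matrix.mulVec_add, Matrix.mulVec_smul, Matrix.mulVec_smul, hwu, hwu', hv₁]
    funext i
    simp [Pi.smul_apply]
    field_simp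
  have hX1 : X *ᵥ (Pi.single 1 1 : Fin 3 → ℝ) = (q * a / s) • (Pi.single 0 1 : Fin 3 → ℝ) := by
    rw [hX, ← Matrix.mulVec_mulVec, ← Matrix.mulVec_mulVec, hPv₂, hwv₂, Matrix.mulVec_smul,
      ← hPv₁, hPinvVec]
  -- column 2 of X
  have hucomb : u = s⁻¹ • v₁ := by rw [hv₁]; funext i; simp; field_simp
  have hu'comb : u' = q⁻¹ • v₂ - (p/(q*s)) • v₁ := by
    rw [hv₂, hv₁]; funext i; simp [Pi.smul_apply, Pi.sub_apply]; field_simp; ring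
  obtain ⟨α, β, hwy₂⟩ : ∃ α β : ℝ, w *ᵥ (P *ᵥ (Pi.single 2 1 : Fin 3 → ℝ))
      = α • v₁ + β • v₂ := by
    set y := P *ᵥ (Pi.single 2 1 : Fin 3 → ℝ)
    refine ⟨(a * (g *ᵥ y) 1 + c * (g *ᵥ y) 2) * s⁻¹ - (b * (g *ᵥ y) 2) * (p/(q*s)),
      (b * (g *ᵥ y) 2) * q⁻¹, ?_⟩
    rw [hwy y, hucomb, hu'comb]
    funext i
    simp [Pi.smul_apply, Pi.sub_apply, Pi.add_apply]
    ring
  have hX2 : X *ᵥ (Pi.single 2 1 : Fin 3 → ℝ)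
      = α • (Pi.single 0 1 : Fin 3 → ℝ) + β • (Pi.single 1 1 : Fin 3 → ℝ) := by
    rw [hX, ← Matrix.mulVec_mulVec, ← Matrix.mulVec_mulVec, hwy₂, Matrix.mulVec_add,
      Matrix.mulVec_smul, Matrix.mulVec_smul, ← hPv₁, ← hPv₂, hPinvVec, hPinvVec]
  -- entries
  have ent : ∀ (i j : Fin 3), (X *ᵥ (Pi.single j 1 : Fin 3 → ℝ)) i = X i j := by
    intro i j; rw [Matrix.mulVec_single]; simp
  have e00 : X 0 0 = 0 := by rw [← ent 0 0, hX0]; rfl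
  have e10 : X 1 0 = 0 := by rw [← ent 1 0, hX0]; rfl
  have e20 : X 2 0 = 0 := by rw [← ent 2 0, hX0]; rfl
  have e11 : X 1 1 = 0 := by rw [← ent 1 1, hX1]; simp [Pi.single_apply]
  have e21 : X 2 1 = 0 := by rw [← ent 2 1, hX1]; simp [Pi.single_apply]
  have e22 : X 2 2 = 0 := by rw [← ent 2 2, hX2]; simp [Pi.single_apply]
  ext i j
  fin_cases i <;> fin_cases j <;>
    simp [n3, e00, e10, e20, e11, e21, e22, Matrix.vecHead, Matrix.vecTail]

theorem n3_smul (s a b c : ℝ) : s • n3 a b c = n3 (s*a) (s*b) (s*c) := by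
  ext i j
  fin_cases i <;> fin_cases j <;> simp [n3, Matrix.vecHead, Matrix.vecTail]

theorem surj_lemma (g P : Matrix (Fin 3) (Fin 3) ℝ) (hg : g.det = 1) (hP : P.det = 1)
    (hflag : ∀ a b c : ℝ, P⁻¹ * (g⁻¹ * n3 a b c * g) * P =
      n3 ((P⁻¹ * (g⁻¹ * n3 a b c * g) * P) 0 1)
         ((P⁻¹ * (g⁻¹ * n3 a b c * g) * P) 1 2)
         ((P⁻¹ * (g⁻¹ * n3 a b c * g) * P) 0 2)) (a b c : ℝ) :
    ∃ a' b' c' : ℝ, P * n3 a b c * P⁻¹ = g⁻¹ * n3 a' b' c' * g := by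
  set Y : (Fin 3 → ℝ) → Matrix (Fin 3) (Fin 3) ℝ :=
    fun v => P⁻¹ * (g⁻¹ * n3 (v 0) (v 1) (v 2) * g) * P with hY
  have hn3v : ∀ v w : Fin 3 → ℝ, n3 ((v+w) 0) ((v+w) 1) ((v+w) 2)
      = n3 (v 0) (v 1) (v 2) + n3 (w 0) (w 1) (w 2) := by
    intro v w; rw [n3_add]; simp
  have hYadd : ∀ v w, Y (v + w) = Y v + Y w := by
    intro v w
    rw [hY]
    simp only
    rw [hn3v, Matrix.mul_add, Matrix.add_mul, Matrix.mul_add, Matrix.add_mul]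
  have hYsmul : ∀ (s : ℝ) v, Y (s • v) = s • Y v := by
    intro s v
    rw [hY]
    simp only [Pi.smul_apply, smul_eq_mul]
    rw [← n3_smul, Matrix.mul_smul, Matrix.smul_mul, Matrix.mul_smul, Matrix.smul_mul]
  set F : (Fin 3 → ℝ) →ₗ[ℝ] (Fin 3 → ℝ) :=
    { toFun := fun v => ![Y v 0 1, Y v 1 2, Y v 0 2],
      map_add' := by
        intro v w
        funext i
        fin_cases i <;> simp [hYadd, Matrix.add_apply]
      map_smul' := by
        intro s v
        funext i
        fin_cases i <;> simp [hYsmul, Matrix.smul_apply] } with hF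
  have hFn3 : ∀ v : Fin 3 → ℝ, Y v = n3 (F v 0) (F v 1) (F v 2) := by
    intro v
    have := hflag (v 0) (v 1) (v 2)
    rw [hF]
    simpa [hY] using this
  have hzero : ∀ v : Fin 3 → ℝ, F v = 0 → v = 0 := by
    intro v hv
    have h1 : Y v = 0 := by
      rw [hFn3 v, hv]
      ext i j
      fin_cases i <;> fin_cases j <;> simp [n3, Matrix.vecHead, Matrix.vecTail]
    have h2 : g⁻¹ * n3 (v 0) (v 1) (v 2) * g = 0 := by
      calc g⁻¹ * n3 (v 0) (v 1) (v 2) * g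
          = P * Y v * P⁻¹ := (conj_back hP _).symm
        _ = 0 := by rw [h1, Matrix.mul_zero, Matrix.zero_mul]
    have h3 : n3 (v 0) (v 1) (v 2) = 0 := by
      have := conj_back hg (n3 (v 0) (v 1) (v 2))
      rw [← this, h2, Matrix.mul_zero, Matrix.zero_mul]
    funext i
    fin_cases i
    · have := congrFun (congrFun h3 0) 1; simpa [n3] using this
    · have := congrFun (congrFun h3 1) 2
      simpa [n3, Matrix.vecHead, Matrix.vecTail] using this
    · have := congrFun (congrFun h3 0) 2
      simpa [n3, Matrix.vecHead, Matrix.vecTail] using this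
  have hinj : Function.Injective F := by
    intro v w h
    have : F (v - w) = 0 := by rw [map_sub, h, sub_self]
    have := hzero _ this
    exact sub_eq_zero.mp this
  have hsurj : Function.Surjective F := LinearMap.injective_iff_surjective.mp hinj
  obtain ⟨v, hv⟩ := hsurj ![a, b, c]
  refine ⟨v 0, v 1, v 2, ?_⟩
  have h4 : Y v = n3 a b c := by
    rw [hFn3 v, hv]
    simp
  calc P * n3 a b c * P⁻¹ = P * Y v * P⁻¹ := by rw [h4]
    _ = g⁻¹ * n3 (v 0) (v 1) (v 2) * g := conj_back hP _

theorem funext3 {f h : Fin 3 → ℝ} (h0 : f 0 = h 0) (h1 : f 1 = h 1) (h2 : f 2 = h 2) :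
    f = h := by
  funext j
  fin_cases j
  exacts [h0, h1, h2]

theorem prop_of_minors (v w : Fin 3 → ℝ) (hv : v ≠ 0)
    (h01 : v 0 * w 1 = v 1 * w 0) (h02 : v 0 * w 2 = v 2 * w 0)
    (h12 : v 1 * w 2 = v 2 * w 1) : ∃ t : ℝ, w = t • v := by
  have hcase : v 0 ≠ 0 ∨ v 1 ≠ 0 ∨ v 2 ≠ 0 := by
    by_contra h
    push_neg at h
    apply hv
    exact funext3 h.1 h.2.1 h.2.2
  rcases hcase with hk | hk | hk
  · refine ⟨w 0 / v 0, funext3 ?_ ?_ ?_⟩ <;>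
      (simp only [Pi.smul_apply, smul_eq_mul]; rw [div_mul_eq_mul_div, eq_div_iff hk])
    · linear_combination h01
    · linear_combination h02
  · refine ⟨w 1 / v 1, funext3 ?_ ?_ ?_⟩ <;>
      (simp only [Pi.smul_apply, smul_eq_mul]; rw [div_mul_eq_mul_div, eq_div_iff hk])
    · linear_combination -h01
    · linear_combination h12
  · refine ⟨w 2 / v 2, funext3 ?_ ?_ ?_⟩ <;>
      (simp only [Pi.smul_apply, smul_eq_mul]; rw [div_mul_eq_mul_div, eq_div_iff hk])
    · linear_combination -h02
    · linear_combination -h12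

theorem n3_sub (a b c a' b' c' : ℝ) : n3 a b c - n3 a' b' c' = n3 (a-a') (b-b') (c-c') := by
  ext i j
  fin_cases i <;> fin_cases j <;> simp [n3, Matrix.vecHead, Matrix.vecTail]

theorem conj_entry (g : Matrix (Fin 3) (Fin 3) ℝ) (a b c : ℝ) (i j : Fin 3) :
    (g⁻¹ * n3 a b c * g) i j
      = g⁻¹ i 0 * (a * g 1 j + c * g 2 j) + g⁻¹ i 1 * (b * g 2 j) := by
  simp [Matrix.mul_apply, n3, Fin.sum_univ_three, Matrix.vecHead, Matrix.vecTail]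
  ring

theorem intmat_mul (A B : Matrix (Fin 3) (Fin 3) ℝ)
    (hA : ∀ i j, ∃ k : ℤ, A i j = k) (hB : ∀ i j, ∃ k : ℤ, B i j = k) :
    ∀ i j, ∃ k : ℤ, (A * B) i j = k := by
  choose KA hKA using hA
  choose KB hKB using hB
  intro i j
  refine ⟨∑ x : Fin 3, KA i x * KB x j, ?_⟩
  rw [Matrix.mul_apply]
  push_cast
  exact Finset.sum_congr rfl fun x _ => by rw [hKA, hKB]

theorem intmat_sub (A B : Matrix (Fin 3) (Fin 3) ℝ)
    (hA : ∀ i j, ∃ k : ℤ, A i j = k) (hB : ∀ i j, ∃ k : ℤ, B i j = k) :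
    ∀ i j, ∃ k : ℤ, (A - B) i j = k := by
  choose KA hKA using hA
  choose KB hKB using hB
  intro i j
  refine ⟨KA i j - KB i j, ?_⟩
  push_cast
  rw [Matrix.sub_apply, hKA, hKB]

theorem map_mul_rat (A B : Matrix (Fin 3) (Fin 3) ℚ) :
    (A * B).map (Rat.cast : ℚ → ℝ) = A.map (Rat.cast : ℚ → ℝ) * B.map (Rat.cast : ℚ → ℝ) := by
  ext i j
  simp [Matrix.map_apply, Matrix.mul_apply]

theorem sum_sq_ne (x y z : ℝ) (h : x ≠ 0 ∨ y ≠ 0 ∨ z ≠ 0) : x^2 + y^2 + z^2 ≠ 0 := by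
  rcases h with h | h | h <;> positivity

/-- If `g ∈ SL₃(ℝ)` is such that `g⁻¹ U⁺ g ∩ SL₃(ℤ)` is a lattice in `g⁻¹ U⁺ g`
(i.e. the integer points form a discrete cocompact subgroup of the conjugated
unipotent group), then `g⁻¹ U⁺ g = g₀⁻¹ U⁺ g₀` for some rational `g₀ ∈ SL₃(ℚ)`. -/
theorem conjugate_unipotent_rational (g : Matrix (Fin 3) (Fin 3) ℝ) (hg : g.det = 1)
    (L : Set (Matrix (Fin 3) (Fin 3) ℝ))
    (hL : L = ((fun x => g⁻¹ * x * g) '' Uplus) ∩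
      {m | ∀ i j : Fin 3, ∃ k : ℤ, m i j = (k : ℝ)})
    -- discreteness of the integer points:
    (hdisc : ∃ ε > (0:ℝ), ∀ l ∈ L, l ≠ 1 → ∃ i j : Fin 3, ε ≤ |l i j - (1 : Matrix (Fin 3) (Fin 3) ℝ) i j|)
    -- cocompactness: a compact subset of the conjugated group meets every coset of `L`:
    (hcocpt : ∃ K : Set (Matrix (Fin 3) (Fin 3) ℝ), IsCompact K ∧
      K ⊆ (fun x => g⁻¹ * x * g) '' Uplus ∧
      ∀ c ∈ (fun x => g⁻¹ * x * g) '' Uplus, ∃ l ∈ L, c * l ∈ K) :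
    ∃ g₀ : Matrix (Fin 3) (Fin 3) ℚ, g₀.det = 1 ∧
      (fun x => g⁻¹ * x * g) '' Uplus =
        (fun x => (g₀.map (Rat.cast : ℚ → ℝ))⁻¹ * x * g₀.map (Rat.cast : ℚ → ℝ)) '' Uplus := by
  obtain ⟨a₁, b₁, c₁, a₂, b₂, c₂, hl₁, hl₂, hd⟩ := exists_indep g hg L hL hcocpt
  set d : ℝ := a₁*b₂ - a₂*b₁ with hdd
  have hgdu : IsUnit g.det := hdetu hg
  have hgg : g * g⁻¹ = 1 := Matrix.mul_nonsing_inv g hgdu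
  set M₁ := g⁻¹ * n3 a₁ b₁ c₁ * g with hM₁def
  set M₂ := g⁻¹ * n3 a₂ b₂ c₂ * g with hM₂def
  -- integrality of entries
  have hint : ∀ M : Matrix (Fin 3) (Fin 3) ℝ, (1 + M) ∈ L →
      ∀ i j, ∃ k : ℤ, M i j = k := by
    intro M hM i j
    rw [hL] at hM
    obtain ⟨k, hk⟩ := hM.2 i j
    by_cases hij : i = j
    · exact ⟨k - 1, by push_cast; rw [← hk]; simp [Matrix.add_apply, Matrix.one_apply, hij]⟩
    · exact ⟨k, by rw [← hk]; simp [Matrix.add_apply, Matrix.one_apply, hij]⟩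
  have hM₁int := hint M₁ hl₁
  have hM₂int := hint M₂ hl₂
  -- the commutator-type element
  set M₃ := M₁ * M₂ - M₂ * M₁ with hM₃def
  have hM₃int : ∀ i j, ∃ k : ℤ, M₃ i j = k :=
    intmat_sub _ _ (intmat_mul _ _ hM₁int hM₂int) (intmat_mul _ _ hM₂int hM₁int)
  have hM₃eq : M₃ = g⁻¹ * n3 0 0 d * g := by
    rw [hM₃def, hM₁def, hM₂def, conj_mul' hg, conj_mul' hg, n3_mul, n3_mul]
    have h1 : g⁻¹ * n3 0 0 (a₁*b₂) * g - g⁻¹ * n3 0 0 (a₂*b₁) * g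
        = g⁻¹ * (n3 0 0 (a₁*b₂) - n3 0 0 (a₂*b₁)) * g := by noncomm_ring
    rw [h1, n3_sub, hdd]
    norm_num
  -- a nonzero entry in the bottom row of g
  obtain ⟨j₀, hj₀⟩ : ∃ j, g 2 j ≠ 0 := by
    by_contra h
    push_neg at h
    rw [Matrix.det_fin_three, h 0, h 1, h 2] at hg
    norm_num at hg
  -- the two columns of g⁻¹
  set u : Fin 3 → ℝ := fun i => g⁻¹ i 0 with hu
  set u' : Fin 3 → ℝ := fun i => g⁻¹ i 1 with hu'
  have hgu : g *ᵥ u = (Pi.single 0 1 : Fin 3 → ℝ) := by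
    funext i
    have h := congrFun (congrFun hgg i) 0
    rw [Matrix.mul_apply] at h
    simpa [Matrix.mulVec, dotProduct, hu, Matrix.one_apply, Pi.single_apply] using h
  have hgu' : g *ᵥ u' = (Pi.single 1 1 : Fin 3 → ℝ) := by
    funext i
    have h := congrFun (congrFun hgg i) 1
    rw [Matrix.mul_apply] at h
    simpa [Matrix.mulVec, dotProduct, hu', Matrix.one_apply, Pi.single_apply] using h
  have hune : u ≠ 0 := by
    intro h
    rw [h, Matrix.mulVec_zero] at hgu
    have := congrFun hgu 0
    simp [Pi.single_apply] at this
  -- first column vector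
  set s : ℝ := d * g 2 j₀ with hs_def
  have hs : s ≠ 0 := mul_ne_zero hd hj₀
  set v₁ : Fin 3 → ℝ := fun i => M₃ i j₀ with hv₁def
  have hv₁ : v₁ = s • u := by
    funext i
    show M₃ i j₀ = _
    rw [hM₃eq, conj_entry]
    simp [hu, hs_def]
    ring
  have hv₁int : ∀ i, ∃ k : ℤ, v₁ i = k := fun i => hM₃int i j₀
  have hv₁ne : v₁ ≠ 0 := by
    intro h
    apply hune
    funext i
    have h2 := congrFun h i
    rw [hv₁] at h2
    simp only [Pi.smul_apply, smul_eq_mul] at h2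
    have := mul_eq_zero.mp h2
    rcases this with h3 | h3
    · exact absurd h3 hs
    · exact h3
  -- second column vector
  have hbne : b₁ ≠ 0 ∨ b₂ ≠ 0 := by
    by_contra h
    push_neg at h
    apply hd
    rw [hdd, h.1, h.2]
    ring
  obtain ⟨v₂, p, q, hq, hv₂, hv₂int⟩ : ∃ (v₂ : Fin 3 → ℝ) (p q : ℝ), q ≠ 0 ∧
      v₂ = p • u + q • u' ∧ ∀ i, ∃ k : ℤ, v₂ i = k := by
    rcases hbne with hb | hb
    · refine ⟨fun i => M₁ i j₀, a₁ * g 1 j₀ + c₁ * g 2 j₀, b₁ * g 2 j₀,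
        mul_ne_zero hb hj₀, ?_, fun i => hM₁int i j₀⟩
      funext i
      show M₁ i j₀ = _
      rw [hM₁def, conj_entry]
      simp [hu, hu']
      ring
    · refine ⟨fun i => M₂ i j₀, a₂ * g 1 j₀ + c₂ * g 2 j₀, b₂ * g 2 j₀,
        mul_ne_zero hb hj₀, ?_, fun i => hM₂int i j₀⟩
      funext i
      show M₂ i j₀ = _
      rw [hM₂def, conj_entry]
      simp [hu, hu']
      ring
  -- third column vector (cross product)
  set v₃ : Fin 3 → ℝ := ![v₁ 1 * v₂ 2 - v₁ 2 * v₂ 1, v₁ 2 * v₂ 0 - v₁ 0 * v₂ 2,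
    v₁ 0 * v₂ 1 - v₁ 1 * v₂ 0] with hv₃def
  have hv₃0 : v₃ 0 = v₁ 1 * v₂ 2 - v₁ 2 * v₂ 1 := by rw [hv₃def]; simp
  have hv₃1 : v₃ 1 = v₁ 2 * v₂ 0 - v₁ 0 * v₂ 2 := by rw [hv₃def]; simp
  have hv₃2 : v₃ 2 = v₁ 0 * v₂ 1 - v₁ 1 * v₂ 0 := by rw [hv₃def]; simp
  have hv₃ne : ¬(v₃ 0 = 0 ∧ v₃ 1 = 0 ∧ v₃ 2 = 0) := by
    rintro ⟨h0, h1, h2⟩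
    rw [hv₃0] at h0
    rw [hv₃1] at h1
    rw [hv₃2] at h2
    obtain ⟨t, ht⟩ := prop_of_minors v₁ v₂ hv₁ne (by linarith) (by linarith) (by linarith)
    have e1 : g *ᵥ v₂ = p • (Pi.single 0 1 : Fin 3 → ℝ) + q • (Pi.single 1 1 : Fin 3 → ℝ) := by
      rw [hv₂, Matrix.mulVec_add, Matrix.mulVec_smul, Matrix.mulVec_smul, hgu, hgu']
    have e2 : g *ᵥ v₂ = (t*s) • (Pi.single 0 1 : Fin 3 → ℝ) := by
      rw [ht, hv₁, Matrix.mulVec_smul, Matrix.mulVec_smul, hgu, smul_smul]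
    have := congrFun (e1.symm.trans e2) 1
    simp [Pi.single_apply] at this
    exact hq this
  set D : ℝ := v₃ 0^2 + v₃ 1^2 + v₃ 2^2 with hDdef
  have hD : D ≠ 0 := by
    have : v₃ 0 ≠ 0 ∨ v₃ 1 ≠ 0 ∨ v₃ 2 ≠ 0 := by
      by_contra h
      push_neg at h
      exact hv₃ne ⟨h.1, h.2.1, h.2.2⟩
    rw [hDdef]
    exact sum_sq_ne _ _ _ this
  -- rational data
  choose k₁ hk₁ using hv₁int
  choose k₂ hk₂ using hv₂int
  set q1 : Fin 3 → ℚ := fun i => (k₁ i : ℚ) with hq1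
  set q2 : Fin 3 → ℚ := fun i => (k₂ i : ℚ) with hq2
  set q3 : Fin 3 → ℚ := ![q1 1 * q2 2 - q1 2 * q2 1, q1 2 * q2 0 - q1 0 * q2 2,
    q1 0 * q2 1 - q1 1 * q2 0] with hq3
  have hq1c : ∀ i, ((q1 i : ℚ) : ℝ) = v₁ i := by
    intro i; rw [hq1]; push_cast; rw [hk₁]
  have hq2c : ∀ i, ((q2 i : ℚ) : ℝ) = v₂ i := by
    intro i; rw [hq2]; push_cast; rw [hk₂]
  have h30 : ((q3 0 : ℚ) : ℝ) = v₃ 0 := by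
    rw [show q3 0 = q1 1 * q2 2 - q1 2 * q2 1 by rw [hq3]; simp, hv₃0]
    push_cast
    rw [hq1c, hq1c, hq2c, hq2c]
  have h31 : ((q3 1 : ℚ) : ℝ) = v₃ 1 := by
    rw [show q3 1 = q1 2 * q2 0 - q1 0 * q2 2 by rw [hq3]; simp, hv₃1]
    push_cast
    rw [hq1c, hq1c, hq2c, hq2c]
  have h32 : ((q3 2 : ℚ) : ℝ) = v₃ 2 := by
    rw [show q3 2 = q1 0 * q2 1 - q1 1 * q2 0 by rw [hq3]; simp, hv₃2]
    push_cast
    rw [hq1c, hq1c, hq2c, hq2c]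
  have hq3c : ∀ i, ((q3 i : ℚ) : ℝ) = v₃ i := by
    intro i
    fin_cases i
    exacts [h30, h31, h32]
  set D₀ : ℚ := q3 0^2 + q3 1^2 + q3 2^2 with hD₀def
  have hD₀c : ((D₀ : ℚ) : ℝ) = D := by
    rw [hD₀def, hDdef]
    push_cast
    rw [h30, h31, h32]
  have hD₀ : D₀ ≠ 0 := by
    intro h
    apply hD
    rw [← hD₀c, h]
    norm_num
  -- the rational matrix
  set P₀ : Matrix (Fin 3) (Fin 3) ℚ :=
    Matrix.of (fun i j => (![q1 i, q2 i, q3 i / D₀] : Fin 3 → ℚ) j) with hP₀def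
  set P : Matrix (Fin 3) (Fin 3) ℝ := P₀.map (Rat.cast : ℚ → ℝ) with hPdef
  have hP0 : ∀ i, P i 0 = v₁ i := by
    intro i
    rw [hPdef, Matrix.map_apply]
    rw [show P₀ i 0 = q1 i by rw [hP₀def]; simp]
    exact hq1c i
  have hP1 : ∀ i, P i 1 = v₂ i := by
    intro i
    rw [hPdef, Matrix.map_apply]
    rw [show P₀ i 1 = q2 i by rw [hP₀def]; simp]
    exact hq2c i
  have hP2 : ∀ i, P i 2 = v₃ i / D := by
    intro i
    rw [hPdef, Matrix.map_apply]
    rw [show P₀ i 2 = q3 i / D₀ by rw [hP₀def]; simp]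
    push_cast
    rw [hq3c, hD₀c]
  have hdetP : P.det = 1 := by
    rw [Matrix.det_fin_three]
    rw [hP0 0, hP0 1, hP0 2, hP1 0, hP1 1, hP1 2, hP2 0, hP2 1, hP2 2]
    rw [hv₃0, hv₃1, hv₃2]
    field_simp
    rw [hDdef, hv₃0, hv₃1, hv₃2]
    ring
  have hPunit : IsUnit P.det := by rw [hdetP]; exact isUnit_one
  have hdetP₀ : P₀.det = 1 := by
    have h1 := RingHom.map_det (Rat.castHom ℝ) P₀
    rw [RingHom.mapMatrix_apply] at h1
    have h2 : ((P₀.det : ℚ) : ℝ) = P.det := h1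
    rw [hdetP] at h2
    exact_mod_cast h2
  have hP₀unit : IsUnit P₀.det := by rw [hdetP₀]; exact isUnit_one
  -- the answer
  refine ⟨P₀⁻¹, ?_, ?_⟩
  · rw [Matrix.det_nonsing_inv, hdetP₀]
    simp
  · -- identify the map of the inverse
    have hmapinv : (P₀⁻¹).map (Rat.cast : ℚ → ℝ) = P⁻¹ := by
      symm
      apply Matrix.inv_eq_right_inv
      rw [hPdef, ← map_mul_rat, Matrix.mul_nonsing_inv P₀ hP₀unit]
      exact Matrix.map_one _ Rat.cast_zero Rat.cast_one
    have hPP : P⁻¹⁻¹ = P := Matrix.nonsing_inv_nonsing_inv P hPunit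
    have hPinvdet : (P⁻¹).det = 1 := by
      rw [Matrix.det_nonsing_inv, hdetP]
      simp
    rw [hmapinv]
    have hflag := flag_lemma g P hg hdetP u u' v₁ v₂ s p q hs hq hgu hgu' hv₁ hv₂ hP0 hP1
    ext m
    rw [img_eq hg, img_eq hPinvdet]
    simp only [Set.mem_setOf_eq, hPP]
    constructor
    · rintro ⟨a, b, c, rfl⟩
      refine ⟨(P⁻¹ * (g⁻¹ * n3 a b c * g) * P) 0 1, (P⁻¹ * (g⁻¹ * n3 a b c * g) * P) 1 2,
        (P⁻¹ * (g⁻¹ * n3 a b c * g) * P) 0 2, ?_⟩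
      have h2 := conj_back hdetP (g⁻¹ * n3 a b c * g)
      rw [← hflag a b c, h2]
    · rintro ⟨a, b, c, rfl⟩
      obtain ⟨a', b', c', h⟩ := surj_lemma g P hg hdetP hflag a b c
      exact ⟨a', b', c', by rw [h]⟩
end
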